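/- Define recursively n₁ = 0 and n_{k+1} = 2^{n_k} + 1, and let y_n = 2^{-n_k} for n ∈ [n_k, n_{k+1}). Then the lower decay rate sup{α ≥ 0 : Σ y_n^{1/α} < ∞} of the sequence (y_n) equals 1. -/

import Mathlib

open Filter

/-- The sequence `n₁ = 0`, `n_{k+1} = 2^{n_k} + 1` (here `nk 0 = 0`). -/
def nk : ℕ → ℕ
  | 0 => 0
  | k + 1 => 2 ^ nk k + 1

lemma nk_lt_succ (k : ℕ) : nk k < nk (k + 1) := by
  show nk k < 2 ^ nk k + 1
  exact Nat.lt_succ_of_lt Nat.lt_two_pow_self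
lemma nk_mono : StrictMono nk := strictMono_nat_of_lt_succ nk_lt_succ
lemma le_nk (k : ℕ) : k ≤ nk k := nk_mono.le_apply
lemma exists_nk (n : ℕ) : ∃ k, nk k ≤ n ∧ n < nk (k + 1) := by
  have h : ∃ k, n < nk k := ⟨n + 1, (Nat.lt_succ_self n).trans_le (le_nk (n + 1))⟩
  cases hfind : Nat.find h with
  | zero =>
    have hspec := Nat.find_spec h
    rw [hfind] at hspec
    simp [nk] at hspec
  | succ m =>
    have hspec := Nat.find_spec h
    rw [hfind] at hspec
    refine ⟨m, ?_, hspec⟩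
    have hmin := Nat.find_min h (m := m) (by omega)
    omega

lemma sum_range_nk (f : ℕ → ℝ) (K : ℕ) :
    ∑ i ∈ Finset.range (nk K), f i
      = ∑ k ∈ Finset.range K, ∑ i ∈ Finset.Ico (nk k) (nk (k + 1)), f i := by
  induction K with
  | zero => simp [nk]
  | succ K ih =>
    rw [Finset.sum_range_succ, ← ih, Finset.range_eq_Ico, Finset.range_eq_Ico]
    exact (Finset.sum_Ico_consecutive f (Nat.zero_le _) (nk_mono.monotone (Nat.le_succ K))).symm

lemma block_sum (y : ℕ → ℝ)
    (hy : ∀ k n : ℕ, nk k ≤ n → n < nk (k + 1) → y n = (2 : ℝ) ^ (-(nk k : ℝ)))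
    (k : ℕ) :
    ∑ i ∈ Finset.Ico (nk k) (nk (k + 1)), y i
      = ((nk (k + 1) - nk k : ℕ) : ℝ) * (2 : ℝ) ^ (-(nk k : ℝ)) := by
  rw [Finset.sum_congr rfl
    (fun i hi => hy k i (Finset.mem_Ico.1 hi).1 (Finset.mem_Ico.1 hi).2)]
  rw [Finset.sum_const, Nat.card_Ico, nsmul_eq_mul]

lemma two_mul_le (m : ℕ) : 2 * m ≤ 2 ^ m + 2 := by
  have h1 := Nat.lt_two_pow_self (n := m)
  induction m with
  | zero => simp
  | succ n ih =>
    have h2 := Nat.lt_two_pow_self (n := n)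
    rw [pow_succ]
    omega

lemma y_pos (y : ℕ → ℝ)
    (hy : ∀ k n : ℕ, nk k ≤ n → n < nk (k + 1) → y n = (2 : ℝ) ^ (-(nk k : ℝ)))
    (n : ℕ) : 0 < y n := by
  obtain ⟨k, h1, h2⟩ := exists_nk n
  rw [hy k n h1 h2]
  exact Real.rpow_pos_of_pos two_pos _

lemma y_le_one (y : ℕ → ℝ)
    (hy : ∀ k n : ℕ, nk k ≤ n → n < nk (k + 1) → y n = (2 : ℝ) ^ (-(nk k : ℝ)))
    (n : ℕ) : y n ≤ 1 := by
  obtain ⟨k, h1, h2⟩ := exists_nk n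
  rw [hy k n h1 h2]
  exact Real.rpow_le_one_of_one_le_of_nonpos one_le_two (neg_nonpos.2 (Nat.cast_nonneg _))

lemma not_summable_y (y : ℕ → ℝ)
    (hy : ∀ k n : ℕ, nk k ≤ n → n < nk (k + 1) → y n = (2 : ℝ) ^ (-(nk k : ℝ))) :
    ¬ Summable y := by
  intro hS
  have hy0 : ∀ n, 0 ≤ y n := fun n => (y_pos y hy n).le
  have hblock : ∀ k : ℕ, (1 / 2 : ℝ) ≤ ∑ i ∈ Finset.Ico (nk k) (nk (k + 1)), y i := by
    intro k
    rw [block_sum y hy k]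
    set m := nk k with hm
    have hcard : nk (k + 1) - nk k = 2 ^ m + 1 - m := rfl
    have hnat : 2 ^ m ≤ 2 * (2 ^ m + 1 - m) := by
      have h1 := two_mul_le m
      have h2 := Nat.lt_two_pow_self (n := m)
      omega
    have hcast : ((2 : ℝ) ^ m) ≤ 2 * ((nk (k + 1) - nk k : ℕ) : ℝ) := by
      rw [hcard]
      exact_mod_cast Nat.cast_le.2 hnat
    have hrpow : (2 : ℝ) ^ (-(m : ℝ)) = ((2 : ℝ) ^ m)⁻¹ := by
      rw [Real.rpow_neg (by norm_num), Real.rpow_natCast]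
    rw [hrpow]
    have hp : (0 : ℝ) < 2 ^ m := by positivity
    rw [← div_eq_mul_inv, le_div_iff₀ hp]
    linarith
  have hbig : ∀ K : ℕ, (K : ℝ) / 2 ≤ ∑ i ∈ Finset.range (nk K), y i := by
    intro K
    rw [sum_range_nk y K]
    calc (K : ℝ) / 2 = ∑ _k ∈ Finset.range K, (1 / 2 : ℝ) := by
          simp; ring
    _ ≤ _ := Finset.sum_le_sum fun k _ => hblock k
  obtain ⟨K, hK⟩ := exists_nat_gt (2 * ∑' n, y n)
  have h1 : ∑ i ∈ Finset.range (nk K), y i ≤ ∑' n, y n :=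
    Summable.sum_le_tsum _ (fun i _ => hy0 i) hS
  have := hbig K
  linarith

lemma summable_rpow (y : ℕ → ℝ)
    (hy : ∀ k n : ℕ, nk k ≤ n → n < nk (k + 1) → y n = (2 : ℝ) ^ (-(nk k : ℝ)))
    {b : ℝ} (hb : 1 < b) : Summable (fun n => y n ^ b) := by
  set r : ℝ := (2 : ℝ) ^ (1 - b) with hrdef
  have hr0 : 0 < r := Real.rpow_pos_of_pos two_pos _
  have hr1 : r < 1 := Real.rpow_lt_one_of_one_lt_of_neg one_lt_two (by linarith)
  have hnonneg : ∀ n, 0 ≤ y n ^ b := fun n => Real.rpow_nonneg (y_pos y hy n).le b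
  have hblock : ∀ k : ℕ, ∑ i ∈ Finset.Ico (nk k) (nk (k + 1)), y i ^ b ≤ 2 * r ^ k := by
    intro k
    have heq : ∑ i ∈ Finset.Ico (nk k) (nk (k + 1)), y i ^ b
        = ((nk (k + 1) - nk k : ℕ) : ℝ) * ((2 : ℝ) ^ (-(nk k : ℝ))) ^ b := by
      rw [Finset.sum_congr rfl
        (fun i hi => by rw [hy k i (Finset.mem_Ico.1 hi).1 (Finset.mem_Ico.1 hi).2])]
      rw [Finset.sum_const, Nat.card_Ico, nsmul_eq_mul]
    rw [heq]
    set m := nk k with hm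
    have hcard : ((nk (k + 1) - nk k : ℕ) : ℝ) ≤ 2 * (2 : ℝ) ^ (m : ℝ) := by
      have h1 : nk (k + 1) - nk k ≤ 2 * 2 ^ m := by
        have := Nat.one_le_two_pow (n := m)
        have hcard' : nk (k + 1) - nk k = 2 ^ m + 1 - m := rfl
        omega
      calc ((nk (k + 1) - nk k : ℕ) : ℝ) ≤ ((2 * 2 ^ m : ℕ) : ℝ) := Nat.cast_le.2 h1
      _ = 2 * (2 : ℝ) ^ (m : ℝ) := by
          push_cast
          rw [Real.rpow_natCast]
    have hexp : ((2 : ℝ) ^ (-(m : ℝ))) ^ b = (2 : ℝ) ^ (-(m : ℝ) * b) :=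
      (Real.rpow_mul (by norm_num) _ _).symm
    have hpow : (2 : ℝ) ^ (m : ℝ) * (2 : ℝ) ^ (-(m : ℝ) * b) = r ^ m := by
      rw [← Real.rpow_add two_pos, hrdef, ← Real.rpow_natCast ((2:ℝ) ^ (1 - b)) m,
        ← Real.rpow_mul (by norm_num)]
      ring_nf
    have hrm : r ^ m ≤ r ^ k := pow_le_pow_of_le_one hr0.le hr1.le (le_nk k)
    calc ((nk (k + 1) - nk k : ℕ) : ℝ) * ((2 : ℝ) ^ (-(m : ℝ))) ^ b
        ≤ (2 * (2 : ℝ) ^ (m : ℝ)) * ((2 : ℝ) ^ (-(m : ℝ))) ^ b := by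
          gcongr
    _ = 2 * ((2 : ℝ) ^ (m : ℝ) * (2 : ℝ) ^ (-(m : ℝ) * b)) := by rw [hexp]; ring
    _ = 2 * r ^ m := by rw [hpow]
    _ ≤ 2 * r ^ k := by linarith
  apply summable_of_sum_range_le (c := 2 * (1 - r)⁻¹) hnonneg
  intro n
  calc ∑ i ∈ Finset.range n, y i ^ b
      ≤ ∑ i ∈ Finset.range (nk n), y i ^ b :=
        Finset.sum_le_sum_of_subset_of_nonneg (Finset.range_subset_range.2 (le_nk n))
          (fun i _ _ => hnonneg i)
  _ = ∑ k ∈ Finset.range n, ∑ i ∈ Finset.Ico (nk k) (nk (k + 1)), y i ^ b :=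
        sum_range_nk _ n
  _ ≤ ∑ k ∈ Finset.range n, 2 * r ^ k := Finset.sum_le_sum fun k _ => hblock k
  _ = 2 * ∑ k ∈ Finset.range n, r ^ k := by rw [Finset.mul_sum]
  _ ≤ 2 * (1 - r)⁻¹ := by
      have hs := summable_geometric_of_lt_one hr0.le hr1
      have h1 : ∑ k ∈ Finset.range n, r ^ k ≤ ∑' k, r ^ k :=
        Summable.sum_le_tsum _ (fun i _ => pow_nonneg hr0.le i) hs
      rw [tsum_geometric_of_lt_one hr0.le hr1] at h1
      linarith

/-- For the sequence `y_n = 2^{-n_k}` for `n ∈ [n_k, n_{k+1})`, the lower decay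
rate `sup{α ≥ 0 : Σ_{n≥1} y_n^{1/α} < ∞}` equals `1`. -/
theorem stmt5 (y : ℕ → ℝ)
    (hy : ∀ k n : ℕ, nk k ≤ n → n < nk (k + 1) → y n = (2 : ℝ) ^ (-(nk k : ℝ))) :
    sSup {a : ℝ | 0 ≤ a ∧ Summable (fun n : ℕ => y (n + 1) ^ (1 / a))} = 1 := by

  set S := {a : ℝ | 0 ≤ a ∧ Summable (fun n : ℕ => y (n + 1) ^ (1 / a))} with hSdef
  have hmem : ∀ a : ℝ, 0 < a → a < 1 → a ∈ S := by
    intro a ha0 ha1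
    have hb : 1 < 1 / a := by
      rw [lt_div_iff₀ ha0]; linarith
    refine ⟨ha0.le, ?_⟩
    exact (summable_nat_add_iff 1).2 (summable_rpow y hy hb)
  have hub : ∀ a ∈ S, a ≤ 1 := by
    intro a ⟨ha0, hsum⟩
    by_contra h
    push_neg at h
    have hia0 : 0 < 1 / a := by positivity
    have hia1 : 1 / a ≤ 1 := by
      rw [div_le_one (by linarith)]; linarith
    have hle : ∀ n : ℕ, y (n + 1) ≤ y (n + 1) ^ (1 / a) := by
      intro n
      have := Real.rpow_le_rpow_of_exponent_ge (y_pos y hy (n + 1))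
        (y_le_one y hy (n + 1)) hia1
      rwa [Real.rpow_one] at this
    have hs1 : Summable (fun n : ℕ => y (n + 1)) :=
      Summable.of_nonneg_of_le (fun n => (y_pos y hy (n + 1)).le) hle hsum
    exact not_summable_y y hy ((summable_nat_add_iff 1).1 hs1)
  have hne : S.Nonempty := ⟨1 / 2, hmem _ (by norm_num) (by norm_num)⟩
  have hbdd : BddAbove S := ⟨1, fun a ha => hub a ha⟩
  refine le_antisymm (csSup_le hne hub) ?_
  refine le_of_forall_lt fun c hc => ?_
  set a : ℝ := (max c 0 + 1) / 2 with hadef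
  have ha0 : 0 < a := by
    have : (0 : ℝ) ≤ max c 0 := le_max_right _ _
    rw [hadef]; linarith
  have ha1 : a < 1 := by
    have : max c 0 < 1 := max_lt hc one_pos
    rw [hadef]; linarith
  have hca : c < a := by
    have h1 : c ≤ max c 0 := le_max_left _ _
    have h2 : max c 0 < 1 := max_lt hc one_pos
    rw [hadef]; linarith
  exact hca.trans_le (le_csSup hbdd (hmem a ha0 ha1))
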